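/- Optimality conditions for composite conjugates: with f₀, F, g and ρ as above, for any (v̄, x̄, ȳ) ∈ ℝⁿ × ℝⁿ × ℝᵐ, the pair of conditions (a) (f₀ + g∘F)(x̄) + (f₀ + g∘F)*(v̄) = ⟨v̄,x̄⟩ and (b) (f₀ + g∘F)*(v̄) = (f₀ + ⟨ȳ,F⟩)*(v̄) + g*(ȳ) is equivalent to the pair (a') g(F(x̄)) + g*(ȳ) = ⟨ȳ,F(x̄)⟩ and (b') (f₀ + ⟨ȳ,F⟩)(x̄) + (f₀ + ⟨ȳ,F⟩)*(v̄) = ⟨v̄,x̄⟩. -/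

import Mathlib

open scoped BigOperators

noncomputable def dotE {n : ℕ} (v x : Fin n → ℝ) : EReal := ((∑ i, v i * x i : ℝ) : EReal)

noncomputable def conj {n : ℕ} (h : (Fin n → ℝ) → EReal) (v : Fin n → ℝ) : EReal :=
  ⨆ x, dotE v x - h x

noncomputable def conj2 {n m : ℕ} (f : (Fin n → ℝ) × (Fin m → ℝ) → EReal)
    (v : Fin n → ℝ) (y : Fin m → ℝ) : EReal :=
  ⨆ x, ⨆ u, dotE v x + dotE y u - f (x, u)

def epi {α : Type*} (h : α → EReal) : Set (α × ℝ) := {p | h p.1 ≤ (p.2 : EReal)}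

def ConvexFn {α : Type*} [AddCommMonoid α] [Module ℝ α] (h : α → EReal) : Prop :=
  Convex ℝ (epi h)

def ClosedFn {α : Type*} [TopologicalSpace α] (h : α → EReal) : Prop := IsClosed (epi h)

def ProperFn {α : Type*} (h : α → EReal) : Prop := (∃ x, h x ≠ ⊤) ∧ ∀ x, h x ≠ ⊥

/-- Scalarization `⟨y,F⟩ : ℝⁿ → ℝ̄`, equal to `⟨y,F(x)⟩` on `dom F` and `+∞` otherwise. -/
noncomputable def scal {n m : ℕ} (y : Fin m → ℝ) (F : (Fin n → ℝ) → WithTop (Fin m → ℝ))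
    (x : Fin n → ℝ) : EReal :=
  WithTop.recTopCoe ⊤ (fun w => dotE y w) (F x)

/-- The perturbation function `f(x,u) = f₀(x) + g(F(x)+u)` on `dom F`, `+∞` otherwise. -/
noncomputable def pert {n m : ℕ} (f0 : (Fin n → ℝ) → EReal)
    (F : (Fin n → ℝ) → WithTop (Fin m → ℝ)) (g : (Fin m → ℝ) → EReal)
    (p : (Fin n → ℝ) × (Fin m → ℝ)) : EReal :=
  WithTop.recTopCoe ⊤ (fun w => f0 p.1 + g (w + p.2)) (F p.1)

/-- The composite function `(f₀ + g∘F)(x)`, equal to `f₀(x) + g(F(x))` on `dom F`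
and `+∞` otherwise. -/
noncomputable def compFn {n m : ℕ} (f0 : (Fin n → ℝ) → EReal)
    (F : (Fin n → ℝ) → WithTop (Fin m → ℝ)) (g : (Fin m → ℝ) → EReal)
    (x : Fin n → ℝ) : EReal :=
  WithTop.recTopCoe ⊤ (fun w => f0 x + g w) (F x)

lemma finite_pair {a b : EReal} {r : ℝ} (h : a + b = (r : EReal)) :
    ∃ p q : ℝ, a = p ∧ b = q ∧ p + q = r := by
  induction a using EReal.rec with
  | bot => simp [EReal.bot_add] at h
  | top =>
    induction b using EReal.rec with
    | bot => simp [EReal.add_bot] at h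
    | top => simp [EReal.top_add_top] at h
    | coe q => simp [EReal.top_add_coe] at h
  | coe p =>
    induction b using EReal.rec with
    | bot => simp [EReal.add_bot] at h
    | top => simp [EReal.add_top_of_ne_bot (EReal.coe_ne_bot p)] at h
    | coe q =>
      refine ⟨p, q, rfl, rfl, ?_⟩
      exact_mod_cast h

lemma coe_le_add {r s : ℝ} {z : EReal} (h : (r : EReal) ≤ (s : EReal) + z) :
    ((r - s : ℝ) : EReal) ≤ z := by
  induction z using EReal.rec with
  | bot => simp [EReal.add_bot] at h
  | top => exact le_top
  | coe t =>
    rw [← EReal.coe_add, EReal.coe_le_coe_iff] at h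
    rw [EReal.coe_le_coe_iff]
    linarith

lemma fy {n : ℕ} (h : (Fin n → ℝ) → EReal) (v x : Fin n → ℝ) (r : ℝ) (hx : h x = (r : EReal)) :
    dotE v x ≤ (r : EReal) + conj h v := by
  have h1 : dotE v x - (r : EReal) ≤ conj h v := by
    rw [← hx]; exact le_iSup (fun x => dotE v x - h x) x
  calc dotE v x = (r : EReal) + (dotE v x - (r : EReal)) := by
        rw [dotE, ← EReal.coe_sub, ← EReal.coe_add]; norm_num
    _ ≤ (r : EReal) + conj h v := add_le_add le_rfl h1

lemma conj_le_of_eq {n : ℕ} {h : (Fin n → ℝ) → EReal} {v : Fin n → ℝ} {A : EReal}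
    (hh : conj h v = A) (x : Fin n → ℝ) : dotE v x - h x ≤ A :=
  hh ▸ le_iSup (fun x => dotE v x - h x) x

lemma conj_comp_le {n m : ℕ} (f0 : (Fin n → ℝ) → EReal)
    (F : (Fin n → ℝ) → WithTop (Fin m → ℝ)) (g : (Fin m → ℝ) → EReal)
    (v : Fin n → ℝ) (y : Fin m → ℝ) (A B : ℝ)
    (hh : conj (fun x => f0 x + scal y F x) v = (A : EReal))
    (hg : conj g y = (B : EReal)) :
    conj (compFn f0 F g) v ≤ ((A + B : ℝ) : EReal) := by
  apply iSup_le
  intro x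
  cases hFx : F x with
  | top =>
    have : compFn f0 F g x = ⊤ := by simp [compFn, hFx]
    rw [this, EReal.sub_top]
    exact bot_le
  | coe w =>
    have h1 : dotE v x - (f0 x + scal y F x) ≤ (A : EReal) := conj_le_of_eq hh x
    have h2 : dotE y w - g w ≤ (B : EReal) := conj_le_of_eq hg w
    have hs : scal y F x = dotE y w := by simp [scal, hFx]
    have hc : compFn f0 F g x = f0 x + g w := by simp [compFn, hFx]
    have hf0 : f0 x ≠ ⊥ := by
      intro hb
      rw [hs, hb, EReal.bot_add, EReal.sub_bot (by simp [dotE] : dotE v x ≠ ⊥)] at h1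
      exact absurd h1 (by simp)
    have hgw : g w ≠ ⊥ := by
      intro hb
      rw [hb, EReal.sub_bot (by simp [dotE] : dotE y w ≠ ⊥)] at h2
      exact absurd h2 (by simp)
    by_cases hft : f0 x = ⊤
    · rw [hc, hft, EReal.top_add_of_ne_bot hgw, EReal.sub_top]
      exact bot_le
    by_cases hgt : g w = ⊤
    · rw [hc, hgt, EReal.add_top_of_ne_bot hf0, EReal.sub_top]
      exact bot_le
    obtain ⟨p, hp⟩ : ∃ p : ℝ, f0 x = p := ⟨_, (EReal.coe_toReal hft hf0).symm⟩
    obtain ⟨q, hq⟩ : ∃ q : ℝ, g w = q := ⟨_, (EReal.coe_toReal hgt hgw).symm⟩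
    rw [hs, hp] at h1
    rw [hq] at h2
    rw [hc, hp, hq]
    simp only [dotE] at h1 h2 ⊢
    have h1' : (∑ i, v i * x i) - (p + ∑ i, y i * w i) ≤ A := by exact_mod_cast h1
    have h2' : (∑ i, y i * w i) - q ≤ B := by exact_mod_cast h2
    have hfin : (∑ i, v i * x i) - (p + q) ≤ A + B := by linarith
    exact_mod_cast hfin

theorem stmt8 {n m : ℕ} (f0 : (Fin n → ℝ) → EReal)
    (F : (Fin n → ℝ) → WithTop (Fin m → ℝ)) (g : (Fin m → ℝ) → EReal)
    (vb xb : Fin n → ℝ) (yb : Fin m → ℝ) :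
    (compFn f0 F g xb + conj (compFn f0 F g) vb = dotE vb xb ∧
     conj (compFn f0 F g) vb
        = conj (fun x : Fin n → ℝ => f0 x + scal yb F x) vb + conj g yb)
    ↔
    (WithTop.recTopCoe ⊤ g (F xb) + conj g yb = scal yb F xb ∧
     (f0 xb + scal yb F xb) + conj (fun x : Fin n → ℝ => f0 x + scal yb F x) vb
        = dotE vb xb) := by
  set h : (Fin n → ℝ) → EReal := fun x => f0 x + scal yb F x with hh_def
  set D : ℝ := ∑ i, vb i * xb i with hD
  constructor
  · rintro ⟨ha, hb⟩
    obtain ⟨c1, c2, hc1, hc2, hc12⟩ := finite_pair (r := D) ha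
    rw [hc2] at hb
    obtain ⟨A, B, hA, hB, hAB⟩ := finite_pair hb.symm
    -- F xb must be finite
    cases hFx : F xb with
    | top =>
      rw [show compFn f0 F g xb = ⊤ by simp [compFn, hFx]] at hc1
      exact absurd hc1 (by simp)
    | coe w =>
      have hcomp : compFn f0 F g xb = f0 xb + g w := by simp [compFn, hFx]
      rw [hcomp] at hc1
      obtain ⟨p, q, hp, hq, hpq⟩ := finite_pair hc1
      set S : ℝ := ∑ i, yb i * w i with hS
      have hscal : scal yb F xb = (S : EReal) := by simp [scal, hFx, dotE, hS]
      -- Fenchel-Young for g at w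
      have fyg : ((S : ℝ) : EReal) ≤ (q : EReal) + conj g yb := by
        have := fy g yb w q hq
        rwa [dotE] at this
      rw [hB, ← EReal.coe_add, EReal.coe_le_coe_iff] at fyg
      -- Fenchel-Young for h at xb
      have hhxb : h xb = ((p + S : ℝ) : EReal) := by
        rw [hh_def]; dsimp only; rw [hp, hscal, EReal.coe_add]
      have fyh : ((D : ℝ) : EReal) ≤ ((p + S : ℝ) : EReal) + conj h vb := by
        have := fy h vb xb (p + S) hhxb
        rwa [dotE] at this
      rw [hA, ← EReal.coe_add, EReal.coe_le_coe_iff] at fyh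
      have e1 : S = q + B := by linarith
      have e2 : p + S + A = D := by linarith
      constructor
      · simp only [WithTop.recTopCoe_coe]
        rw [hscal, hq, hB, ← EReal.coe_add]
        exact_mod_cast e1.symm
      · rw [show (f0 xb + scal yb F xb) = h xb from rfl, hhxb, hA, dotE, ← hD,
          ← EReal.coe_add]
        exact_mod_cast e2
  · rintro ⟨ha', hb'⟩
    obtain ⟨e1, A, he1, hA, heA⟩ := finite_pair (r := D) hb'
    -- scal must be finite, so F xb is finite
    obtain ⟨p, S', hp, hS', hpS⟩ := finite_pair he1
    cases hFx : F xb with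
    | top =>
      rw [show scal yb F xb = ⊤ by simp [scal, hFx]] at hS'
      exact absurd hS' (by simp)
    | coe w =>
      set S : ℝ := ∑ i, yb i * w i with hS
      have hscal : scal yb F xb = (S : EReal) := by simp [scal, hFx, dotE, hS]
      have hSS : S' = S := by
        rw [hscal] at hS'; exact_mod_cast hS'.symm
      rw [hFx] at ha'
      simp only [WithTop.recTopCoe_coe] at ha'
      rw [hscal] at ha'
      obtain ⟨q, B, hq, hB, hqB⟩ := finite_pair ha'
      have hcomp : compFn f0 F g xb = ((p + q : ℝ) : EReal) := by
        simp [compFn, hFx, hp, hq, ← EReal.coe_add]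
      -- Fenchel-Young for compFn
      have fyc : ((D : ℝ) : EReal) ≤ ((p + q : ℝ) : EReal) + conj (compFn f0 F g) vb := by
        have := fy (compFn f0 F g) vb xb (p + q) hcomp
        rwa [dotE] at this
      have hub : conj (compFn f0 F g) vb ≤ ((A + B : ℝ) : EReal) :=
        conj_comp_le f0 F g vb yb A B hA hB
      have hlb : ((D - (p + q) : ℝ) : EReal) ≤ conj (compFn f0 F g) vb := coe_le_add fyc
      have hDpq : D - (p + q) = A + B := by
        rw [hSS] at hpS
        linarith
      have hconj : conj (compFn f0 F g) vb = ((A + B : ℝ) : EReal) := by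
        refine le_antisymm hub ?_
        rw [← hDpq]
        exact hlb
      constructor
      · rw [hcomp, hconj, ← EReal.coe_add, dotE, ← hD]
        norm_cast
        rw [hSS] at hpS
        linarith
      · rw [hconj, hA, hB, ← EReal.coe_add]
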